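/- For the deconcatenation coproduct Δ_dec on ℚ⟨B⟩, applied coefficientwise to the generating series ρ(W)_d of words in ℚ⟨B⟩, one has for each d ≥ 0: Δ_dec ρ(W)_d(Y₀; X₁,…,X_d; Y₁,…,Y_d) = Σ_{i=0}^{d} ρ(W)_i(Y₀; X₁,…,X_i; Y₁,…,Y_i) ⊗ ρ(W)_{d−i}(Y_i; X_{i+1},…,X_d; Y_{i+1},…,Y_d), an identity of formal power series with coefficients in ℚ⟨B⟩ ⊗_ℚ ℚ⟨B⟩ (where in the i-th summand the first variable of the second factor is Y_i). -/

import Mathlib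

/-!
STATEMENT 4: the deconcatenation coproduct on `ℚ⟨B⟩` applied coefficientwise to the
generating series `ρ(W)_d(Y₀; X₁,…,X_d; Y₁,…,Y_d)` of words in `ℚ⟨B⟩`.

`ℚ⟨B⟩` is realized as the space of finite `ℚ`-linear combinations of words
(lists of `ℕ`, the letter `i` standing for `b_i`).  Formal power series are
functions from exponents; the variable `X_i` is `Sum.inl i` and `Y_i` is `Sum.inr i`
(here `i ≥ 1` for the `X`-variables and `i ≥ 0` for the `Y`-variables).
-/

open Finsupp TensorProduct

/-- `ℚ⟨B⟩`. -/
abbrev QB : Type := List ℕ →₀ ℚ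

/-- The word `b_{s₁} ⋯ b_{s_l}`. -/
noncomputable def wB (w : List ℕ) : QB := Finsupp.single w 1

/-- Exponents of monomials in the variables `X_i = Sum.inl i`, `Y_i = Sum.inr i`. -/
abbrev Expo : Type := (ℕ ⊕ ℕ) →₀ ℕ

open scoped Classical in
/-- The generating series of words of `ℚ⟨B⟩`,
`ρ(W)(Y_{y₀}; X_{i}, … ; Y_{i}, …)` over the positions `i ∈ l` with leading
`Y`-variable `Y_{y₀}`:
`∑ b₀^{m₀}b_{k₁}b₀^{m₁}⋯b_{k_d}b₀^{m_d} · Y_{y₀}^{m₀} X_{i₁}^{k₁-1}Y_{i₁}^{m₁} ⋯`. -/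
noncomputable def genBfull (y₀ : ℕ) (l : List ℕ) : Expo → QB := fun e =>
  if (∀ j : ℕ, j ∉ l → e (Sum.inl j) = 0) ∧
      (∀ j : ℕ, j ≠ y₀ → j ∉ l → e (Sum.inr j) = 0) then
    wB (List.replicate (e (Sum.inr y₀)) 0 ++
      (l.map fun i => (e (Sum.inl i) + 1) :: List.replicate (e (Sum.inr i)) 0).flatten)
  else 0

/-- The deconcatenation coproduct `Δ_dec(w) = ∑_{uv=w} u ⊗ v` on `ℚ⟨B⟩`. -/
noncomputable def decB (x : QB) : QB ⊗[ℚ] QB :=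
  x.sum fun w a =>
    a • ∑ i ∈ Finset.range (w.length + 1), (wB (w.take i)) ⊗ₜ[ℚ] (wB (w.drop i))

/-- The coefficientwise tensor product of two formal power series with coefficients in
`ℚ⟨B⟩`. -/
noncomputable def tensSB (F G : Expo → QB) : Expo → QB ⊗[ℚ] QB :=
  fun e => ∑ p ∈ Finset.HasAntidiagonal.antidiagonal e, (F p.1) ⊗ₜ[ℚ] (G p.2)


/-! ### Auxiliary lemmas -/


/-- Splitting the sum over cuts of `w ++ k :: z`. -/
lemma cut_append_block {M : Type*} [AddCommMonoid M] (f : List ℕ → List ℕ → M)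
    (w : List ℕ) (k : ℕ) (z : List ℕ) :
    ∑ c ∈ Finset.range ((w ++ k :: z).length + 1),
        f ((w ++ k :: z).take c) ((w ++ k :: z).drop c)
      = (∑ c ∈ Finset.range (w.length + 1), f (w.take c) (w.drop c ++ k :: z))
        + ∑ a ∈ Finset.range (z.length + 1), f (w ++ k :: z.take a) (z.drop a) := by
  have hlen : (w ++ k :: z).length + 1 = (w.length + 1) + (z.length + 1) := by
    simp; omega
  rw [hlen, Finset.sum_range_add]
  congr 1
  · refine Finset.sum_congr rfl fun c hc => ?_
    rw [Finset.mem_range] at hc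
    rw [List.take_append, List.drop_append]
    have h0 : c - w.length = 0 := by omega
    simp [h0]
  · refine Finset.sum_congr rfl fun a ha => ?_
    rw [Finset.mem_range] at ha
    rw [List.take_append, List.drop_append]
    have h1 : w.length + 1 + a - w.length = a + 1 := by omega
    rw [h1, List.take_of_length_le (by omega), List.drop_eq_nil_of_le (by omega),
      List.take_succ_cons, List.drop_succ_cons, List.nil_append]

/-- Decomposition of the sum over cuts of a word `w₀ ++ B 0 ++ B 1 ++ ⋯ ++ B (d-1)`
with `B t = K t :: 0^{Mm t}`. -/
lemma cut_blocks {M : Type*} [AddCommMonoid M] (f : List ℕ → List ℕ → M)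
    (w₀ : List ℕ) (K Mm : ℕ → ℕ) (d : ℕ) :
    ∑ c ∈ Finset.range ((w₀ ++ ((List.range d).map fun t =>
          K t :: List.replicate (Mm t) 0).flatten).length + 1),
        f ((w₀ ++ ((List.range d).map fun t => K t :: List.replicate (Mm t) 0).flatten).take c)
          ((w₀ ++ ((List.range d).map fun t => K t :: List.replicate (Mm t) 0).flatten).drop c)
      = (∑ a ∈ Finset.range (w₀.length + 1),
          f (w₀.take a) (w₀.drop a ++
            ((List.range d).map fun t => K t :: List.replicate (Mm t) 0).flatten))
        + ∑ i ∈ Finset.range d, ∑ a ∈ Finset.range (Mm i + 1),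
            f (w₀ ++ ((List.range i).map fun t => K t :: List.replicate (Mm t) 0).flatten
                ++ K i :: List.replicate a 0)
              (List.replicate (Mm i - a) 0 ++
                ((List.range (d - (i + 1))).map fun t =>
                  K (i + 1 + t) :: List.replicate (Mm (i + 1 + t)) 0).flatten) := by
  induction d generalizing f with
  | zero => simp
  | succ d ih =>
    have hfl : ((List.range (d + 1)).map fun t => K t :: List.replicate (Mm t) 0).flatten
        = ((List.range d).map fun t => K t :: List.replicate (Mm t) 0).flatten
          ++ (K d :: List.replicate (Mm d) 0) := by
      rw [List.range_succ, List.map_append, List.flatten_append]; simp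
    rw [hfl, ← List.append_assoc,
      cut_append_block f (w₀ ++ _) (K d) (List.replicate (Mm d) 0),
      ih (fun u v => f u (v ++ (K d :: List.replicate (Mm d) 0)))]
    rw [Finset.sum_range_succ (fun i => ∑ a ∈ Finset.range (Mm i + 1), _) d]
    rw [add_assoc]
    congr 1
    · refine Finset.sum_congr rfl fun a _ => ?_
      rw [List.append_assoc]
    congr 1
    · refine Finset.sum_congr rfl fun i hi => Finset.sum_congr rfl fun a _ => ?_
      rw [Finset.mem_range] at hi
      congr 1
      rw [List.append_assoc]
      have : d + 1 - (i + 1) = (d - (i + 1)) + 1 := by omega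
      rw [this, List.range_succ, List.map_append, List.flatten_append]
      have : i + 1 + (d - (i + 1)) = d := by omega
      simp [this]
    · rw [List.length_replicate]
      refine Finset.sum_congr rfl fun a ha => ?_
      rw [Finset.mem_range] at ha
      rw [List.take_replicate, List.drop_replicate, min_eq_left (by omega)]
      simp [List.append_assoc]

lemma mem_shiftList {c n j : ℕ} : j ∈ (List.range n).map (fun t => c + t) ↔ c ≤ j ∧ j < c + n := by
  simp only [List.mem_map, List.mem_range]
  constructor
  · rintro ⟨t, ht, rfl⟩; omega
  · intro h; exact ⟨j - c, by omega, by omega⟩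

lemma genBfull_neg {y₀ : ℕ} {l : List ℕ} {e : Expo}
    (h : ¬ ((∀ j : ℕ, j ∉ l → e (Sum.inl j) = 0) ∧
      (∀ j : ℕ, j ≠ y₀ → j ∉ l → e (Sum.inr j) = 0))) :
    genBfull y₀ l e = 0 := by
  unfold genBfull
  rw [if_neg h]

lemma genBfull_pos {y₀ : ℕ} {l : List ℕ} {e : Expo}
    (h : (∀ j : ℕ, j ∉ l → e (Sum.inl j) = 0) ∧
      (∀ j : ℕ, j ≠ y₀ → j ∉ l → e (Sum.inr j) = 0)) :
    genBfull y₀ l e = wB (List.replicate (e (Sum.inr y₀)) 0 ++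
      (l.map fun i => (e (Sum.inl i) + 1) :: List.replicate (e (Sum.inr i)) 0).flatten) := by
  unfold genBfull
  rw [if_pos h]

open scoped Classical in
noncomputable def paE (e : Expo) (i a : ℕ) : Expo :=
  Finsupp.filter (fun x => Sum.elim (fun j => j ≤ i) (fun j => j < i) x) e
    + Finsupp.single (Sum.inr i) a

open scoped Classical in
noncomputable def qaE (e : Expo) (i a : ℕ) : Expo :=
  Finsupp.filter (fun x => Sum.elim (fun j => i < j) (fun j => i < j) x) e
    + Finsupp.single (Sum.inr i) (e (Sum.inr i) - a)

lemma paE_inl (e : Expo) (i a j : ℕ) :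
    paE e i a (Sum.inl j) = if j ≤ i then e (Sum.inl j) else 0 := by
  classical
  simp [paE, Finsupp.add_apply, Finsupp.filter_apply, Finsupp.single_apply]
  by_cases hh : j ≤ i <;> simp [hh]

lemma paE_inr (e : Expo) (i a j : ℕ) :
    paE e i a (Sum.inr j) = if j = i then a else if j < i then e (Sum.inr j) else 0 := by
  classical
  simp only [paE, Finsupp.add_apply, Finsupp.filter_apply, Finsupp.single_apply, Sum.elim_inr,
    Sum.inr.injEq]
  rcases eq_or_ne j i with rfl | h
  · simp
  · simp [h, Ne.symm h]
    by_cases hh : j < i <;> simp [hh]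

lemma qaE_inl (e : Expo) (i a j : ℕ) :
    qaE e i a (Sum.inl j) = if i < j then e (Sum.inl j) else 0 := by
  classical
  simp [qaE, Finsupp.add_apply, Finsupp.filter_apply, Finsupp.single_apply]
  by_cases hh : i < j <;> simp [hh]

lemma qaE_inr (e : Expo) (i a j : ℕ) :
    qaE e i a (Sum.inr j) = if j = i then e (Sum.inr i) - a
      else if i < j then e (Sum.inr j) else 0 := by
  classical
  simp only [qaE, Finsupp.add_apply, Finsupp.filter_apply, Finsupp.single_apply, Sum.elim_inr,
    Sum.inr.injEq]
  rcases eq_or_ne j i with rfl | h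
  · simp
  · simp [Ne.symm h, h]
    by_cases hh : i < j <;> simp [hh]

lemma paE_add_qaE (e : Expo) (i a : ℕ) (ha : a ≤ e (Sum.inr i)) :
    paE e i a + qaE e i a = e := by
  ext x
  rw [Finsupp.add_apply]
  cases x with
  | inl j => rw [paE_inl, qaE_inl]; split_ifs <;> omega
  | inr j =>
    rw [paE_inr, qaE_inr]
    rcases eq_or_ne j i with rfl | h
    · simp; omega
    · rw [if_neg h, if_neg h]; split_ifs <;> omega

lemma paE_cond (d i : ℕ) (e : Expo) (a : ℕ)
    (hC1 : ∀ j : ℕ, j ∉ (List.range d).map (fun t => 1 + t) → e (Sum.inl j) = 0) :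
    (∀ j : ℕ, j ∉ (List.range i).map (fun t => 1 + t) → paE e i a (Sum.inl j) = 0) ∧
    (∀ j : ℕ, j ≠ 0 → j ∉ (List.range i).map (fun t => 1 + t) → paE e i a (Sum.inr j) = 0) := by
  constructor
  · intro j hj
    rw [mem_shiftList] at hj
    rw [paE_inl]
    split_ifs with h
    · have hj0 : j = 0 := by omega
      subst hj0
      exact hC1 0 (by rw [mem_shiftList]; omega)
    · rfl
  · intro j hj0 hj
    rw [mem_shiftList] at hj
    rw [paE_inr]
    split_ifs with h1 h2
    · omega
    · omega
    · rfl

lemma qaE_cond (d i : ℕ) (hi : i ≤ d) (e : Expo) (a : ℕ)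
    (hC1 : ∀ j : ℕ, j ∉ (List.range d).map (fun t => 1 + t) → e (Sum.inl j) = 0)
    (hC2 : ∀ j : ℕ, j ≠ 0 → j ∉ (List.range d).map (fun t => 1 + t) → e (Sum.inr j) = 0) :
    (∀ j : ℕ, j ∉ (List.range (d - i)).map (fun t => (i + 1) + t) → qaE e i a (Sum.inl j) = 0) ∧
    (∀ j : ℕ, j ≠ i → j ∉ (List.range (d - i)).map (fun t => (i + 1) + t) →
      qaE e i a (Sum.inr j) = 0) := by
  constructor
  · intro j hj
    rw [mem_shiftList] at hj
    rw [qaE_inl]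
    split_ifs with h
    · exact hC1 j (by rw [mem_shiftList]; omega)
    · rfl
  · intro j hji hj
    rw [mem_shiftList] at hj
    rw [qaE_inr]
    split_ifs with h1 h2
    · exact absurd h1 hji
    · exact hC2 j (by omega) (by rw [mem_shiftList]; omega)
    · rfl

lemma tensSB_eq (d i : ℕ) (hi : i ≤ d) (e : Expo)
    (hC1 : ∀ j : ℕ, j ∉ (List.range d).map (fun t => 1 + t) → e (Sum.inl j) = 0)
    (hC2 : ∀ j : ℕ, j ≠ 0 → j ∉ (List.range d).map (fun t => 1 + t) → e (Sum.inr j) = 0) :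
    tensSB (genBfull 0 ((List.range i).map fun j => 1 + j))
        (genBfull i ((List.range (d - i)).map fun j => (i + 1) + j)) e
      = ∑ a ∈ Finset.range (e (Sum.inr i) + 1),
          (genBfull 0 ((List.range i).map fun j => 1 + j) (paE e i a)) ⊗ₜ[ℚ]
          (genBfull i ((List.range (d - i)).map fun j => (i + 1) + j) (qaE e i a)) := by
  unfold tensSB
  refine (Finset.sum_bij_ne_zero (fun a _ _ => (paE e i a, qaE e i a)) ?_ ?_ ?_ ?_).symm
  · intro a h₁ h₂
    rw [Finset.mem_range] at h₁
    rw [Finset.HasAntidiagonal.mem_antidiagonal]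
    exact paE_add_qaE e i a (by omega)
  · intro a₁ h₁₁ h₁₂ a₂ h₂₁ h₂₂ hEq
    have := congrArg (fun pq : Expo × Expo => pq.1 (Sum.inr i)) hEq
    simpa [paE_inr] using this
  · rintro ⟨p, q⟩ hb hgb
    rw [Finset.HasAntidiagonal.mem_antidiagonal] at hb
    have hpqx : ∀ x, p x + q x = e x := fun x => by
      rw [← Finsupp.add_apply, hb]
    have hP : (∀ j : ℕ, j ∉ (List.range i).map (fun t => 1 + t) → p (Sum.inl j) = 0) ∧
        (∀ j : ℕ, j ≠ 0 → j ∉ (List.range i).map (fun t => 1 + t) → p (Sum.inr j) = 0) := by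
      by_contra h
      exact hgb (by rw [show (genBfull 0 ((List.range i).map fun j => 1 + j) p) = 0 from
        genBfull_neg h]; simp)
    have hQ : (∀ j : ℕ, j ∉ (List.range (d - i)).map (fun t => (i + 1) + t) →
          q (Sum.inl j) = 0) ∧
        (∀ j : ℕ, j ≠ i → j ∉ (List.range (d - i)).map (fun t => (i + 1) + t) →
          q (Sum.inr j) = 0) := by
      by_contra h
      exact hgb (by rw [show (genBfull i ((List.range (d - i)).map fun j => (i + 1) + j) q) = 0
        from genBfull_neg h]; simp)
    have hp : p = paE e i (p (Sum.inr i)) := by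
      ext x
      cases x with
      | inl j =>
        rw [paE_inl]
        by_cases hji : 1 ≤ j ∧ j ≤ i
        · have hq0 : q (Sum.inl j) = 0 := hQ.1 j (by rw [mem_shiftList]; omega)
          have := hpqx (Sum.inl j)
          rw [if_pos (by omega)]
          omega
        · have hp0 : p (Sum.inl j) = 0 := hP.1 j (by rw [mem_shiftList]; omega)
          split_ifs with h
          · have hj0 : j = 0 := by omega
            subst hj0
            rw [hp0, hC1 0 (by rw [mem_shiftList]; omega)]
          · exact hp0
      | inr j =>
        rw [paE_inr]
        rcases eq_or_ne j i with rfl | hne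
        · rw [if_pos rfl]
        · rw [if_neg hne]
          by_cases hji : j < i
          · have hq0 : q (Sum.inr j) = 0 := hQ.2 j (by omega) (by rw [mem_shiftList]; omega)
            have := hpqx (Sum.inr j)
            rw [if_pos hji]
            omega
          · rw [if_neg hji]
            exact hP.2 j (by omega) (by rw [mem_shiftList]; omega)
    have hq : q = qaE e i (p (Sum.inr i)) := by
      ext x
      cases x with
      | inl j =>
        rw [qaE_inl]
        by_cases hji : i < j
        · rw [if_pos hji]
          have hp0 : p (Sum.inl j) = 0 := hP.1 j (by rw [mem_shiftList]; omega)
          have := hpqx (Sum.inl j)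
          omega
        · rw [if_neg hji]
          exact hQ.1 j (by rw [mem_shiftList]; omega)
      | inr j =>
        rw [qaE_inr]
        rcases eq_or_ne j i with rfl | hne
        · rw [if_pos rfl]
          have := hpqx (Sum.inr j)
          omega
        · rw [if_neg hne]
          by_cases hji : i < j
          · rw [if_pos hji]
            have hp0 : p (Sum.inr j) = 0 := hP.2 j (by omega) (by rw [mem_shiftList]; omega)
            have := hpqx (Sum.inr j)
            omega
          · rw [if_neg hji]
            exact hQ.2 j hne (by rw [mem_shiftList]; omega)
    refine ⟨p (Sum.inr i), ?_, ?_, ?_⟩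
    · rw [Finset.mem_range]
      have := hpqx (Sum.inr i)
      omega
    · rw [← hp, ← hq]
      exact hgb
    · exact (Prod.ext hp hq).symm
  · intro a h₁ h₂
    rfl

lemma decB_wB (w : List ℕ) :
    decB (wB w) = ∑ c ∈ Finset.range (w.length + 1),
      (wB (w.take c)) ⊗ₜ[ℚ] (wB (w.drop c)) := by
  unfold decB
  rw [show wB w = Finsupp.single w (1:ℚ) from rfl,
    Finsupp.sum_single_index (by rw [zero_smul]), one_smul]

/-- For each `d ≥ 0`,
`Δ_dec ρ(W)_d(Y₀; X₁,…,X_d; Y₁,…,Y_d)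
 = ∑_{i=0}^{d} ρ(W)_i(Y₀; X₁,…,X_i; Y₁,…,Y_i) ⊗ ρ(W)_{d-i}(Y_i; X_{i+1},…,X_d; Y_{i+1},…,Y_d)`. -/
theorem dec_gen_series_B (d : ℕ) (e : Expo) :
    decB (genBfull 0 ((List.range d).map fun j => 1 + j) e)
      = ∑ i ∈ Finset.range (d + 1),
          tensSB (genBfull 0 ((List.range i).map fun j => 1 + j))
            (genBfull i ((List.range (d - i)).map fun j => (i + 1) + j)) e := by
  by_cases hC : (∀ j : ℕ, j ∉ (List.range d).map (fun t => 1 + t) → e (Sum.inl j) = 0) ∧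
      (∀ j : ℕ, j ≠ 0 → j ∉ (List.range d).map (fun t => 1 + t) → e (Sum.inr j) = 0)
  · obtain ⟨hC1, hC2⟩ := hC
    rw [genBfull_pos ⟨hC1, hC2⟩, decB_wB]
    have hW : (((List.range d).map fun j => 1 + j).map fun i =>
          (e (Sum.inl i) + 1) :: List.replicate (e (Sum.inr i)) 0).flatten
        = ((List.range d).map fun t =>
          (e (Sum.inl (t + 1)) + 1) :: List.replicate (e (Sum.inr (t + 1))) 0).flatten := by
      rw [List.map_map]
      congr 1
      refine List.map_congr_left fun t ht => ?_
      simp only [Function.comp_apply]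
      rw [show 1 + t = t + 1 from by omega]
    rw [hW]
    have hcut := cut_blocks (M := QB ⊗[ℚ] QB) (fun u v => wB u ⊗ₜ[ℚ] wB v)
      (List.replicate (e (Sum.inr 0)) 0)
      (fun t => e (Sum.inl (t + 1)) + 1) (fun t => e (Sum.inr (t + 1))) d
    beta_reduce at hcut
    rw [hcut]
    rw [Finset.sum_congr rfl (fun i hi =>
      tensSB_eq d i (Nat.lt_succ_iff.mp (Finset.mem_range.mp hi)) e hC1 hC2)]
    rw [List.length_replicate]
    conv_rhs => rw [Finset.sum_range_succ']
    have hAC : ∀ x y : QB ⊗[ℚ] QB, x + y = y + x := fun x y => add_comm x y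
    refine Eq.trans (hAC _ _) ?_
    refine congrArg₂ (fun x y : QB ⊗[ℚ] QB => x + y) ?_ ?_
    · refine Finset.sum_congr rfl fun i' hi' => ?_
      rw [Finset.mem_range] at hi'
      refine Finset.sum_congr rfl fun a ha => ?_
      rw [Finset.mem_range] at ha
      rw [genBfull_pos (paE_cond d (i' + 1) e a hC1),
        genBfull_pos (qaE_cond d (i' + 1) (by omega) e a hC1 hC2)]
      have hpre : List.replicate (e (Sum.inr 0)) 0 ++
            ((List.range i').map fun t =>
              (e (Sum.inl (t + 1)) + 1) :: List.replicate (e (Sum.inr (t + 1))) 0).flatten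
            ++ (e (Sum.inl (i' + 1)) + 1) :: List.replicate a 0
          = List.replicate (paE e (i' + 1) a (Sum.inr 0)) 0 ++
            (((List.range (i' + 1)).map fun j => 1 + j).map fun jj =>
              (paE e (i' + 1) a (Sum.inl jj) + 1) ::
                List.replicate (paE e (i' + 1) a (Sum.inr jj)) 0).flatten := by
        rw [List.map_map, paE_inr, if_neg (by omega : ¬ (0 : ℕ) = i' + 1),
          if_pos (by omega : (0 : ℕ) < i' + 1), List.append_assoc]
        congr 1
        rw [List.range_succ, List.map_append, List.flatten_append]
        simp only [List.map_cons, List.map_nil, List.flatten_cons, List.flatten_nil,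
          List.append_nil]
        congr 1
        · congr 1
          refine List.map_congr_left fun t ht => ?_
          rw [List.mem_range] at ht
          simp only [Function.comp_apply]
          rw [paE_inl, if_pos (by omega), paE_inr, if_neg (by omega), if_pos (by omega)]
          rw [show 1 + t = t + 1 from by omega]
        · simp only [Function.comp_apply]
          rw [paE_inl, if_pos (by omega), paE_inr, if_pos (by omega)]
          rw [show 1 + i' = i' + 1 from by omega]
      have hsuf : List.replicate (e (Sum.inr (i' + 1)) - a) 0 ++
            ((List.range (d - (i' + 1))).map fun t =>
              (e (Sum.inl (i' + 1 + t + 1)) + 1) ::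
                List.replicate (e (Sum.inr (i' + 1 + t + 1))) 0).flatten
          = List.replicate (qaE e (i' + 1) a (Sum.inr (i' + 1))) 0 ++
            (((List.range (d - (i' + 1))).map fun j => (i' + 1 + 1) + j).map fun jj =>
              (qaE e (i' + 1) a (Sum.inl jj) + 1) ::
                List.replicate (qaE e (i' + 1) a (Sum.inr jj)) 0).flatten := by
        rw [List.map_map, qaE_inr, if_pos rfl]
        congr 1
        congr 1
        refine List.map_congr_left fun t ht => ?_
        rw [List.mem_range] at ht
        simp only [Function.comp_apply]
        rw [qaE_inl, if_pos (by omega), qaE_inr, if_neg (by omega), if_pos (by omega)]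
        rw [show i' + 1 + t + 1 = i' + 1 + 1 + t from by omega]
      rw [hpre, hsuf]
    · refine Finset.sum_congr rfl fun a ha => ?_
      rw [Finset.mem_range] at ha
      rw [genBfull_pos (paE_cond d 0 e a hC1),
        genBfull_pos (qaE_cond d 0 (by omega) e a hC1 hC2)]
      have hpre0 : List.take a (List.replicate (e (Sum.inr 0)) 0)
          = List.replicate (paE e 0 a (Sum.inr 0)) 0 ++
            (((List.range 0).map fun j => 1 + j).map fun jj =>
              (paE e 0 a (Sum.inl jj) + 1) :: List.replicate (paE e 0 a (Sum.inr jj)) 0).flatten := by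
        rw [paE_inr, if_pos rfl, List.take_replicate, min_eq_left (by omega)]
        simp
      have hsuf0 : List.drop a (List.replicate (e (Sum.inr 0)) 0) ++
            ((List.range d).map fun t =>
              (e (Sum.inl (t + 1)) + 1) :: List.replicate (e (Sum.inr (t + 1))) 0).flatten
          = List.replicate (qaE e 0 a (Sum.inr 0)) 0 ++
            (((List.range (d - 0)).map fun j => (0 + 1) + j).map fun jj =>
              (qaE e 0 a (Sum.inl jj) + 1) :: List.replicate (qaE e 0 a (Sum.inr jj)) 0).flatten := by
        rw [List.drop_replicate, qaE_inr, if_pos rfl, List.map_map, Nat.sub_zero]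
        congr 1
        congr 1
        refine List.map_congr_left fun t ht => ?_
        rw [List.mem_range] at ht
        simp only [Function.comp_apply]
        rw [qaE_inl, if_pos (by omega), qaE_inr, if_neg (by omega), if_pos (by omega)]
        rw [show 0 + 1 + t = t + 1 from by omega]
      rw [hpre0, hsuf0]
  · rw [genBfull_neg hC]
    unfold decB
    rw [Finsupp.sum_zero_index]
    symm
    refine Finset.sum_eq_zero fun i hi => ?_
    rw [Finset.mem_range] at hi
    unfold tensSB
    refine Finset.sum_eq_zero fun p hp => ?_
    rw [Finset.HasAntidiagonal.mem_antidiagonal] at hp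
    rcases not_and_or.mp hC with h | h
    · push_neg at h
      obtain ⟨j, hjl, hj⟩ := h
      rw [mem_shiftList] at hjl
      have hx : p.1 (Sum.inl j) + p.2 (Sum.inl j) = e (Sum.inl j) := by
        rw [← Finsupp.add_apply, hp]
      rcases (by omega : p.1 (Sum.inl j) ≠ 0 ∨ p.2 (Sum.inl j) ≠ 0) with h1 | h1
      · rw [genBfull_neg (fun hc => h1 (hc.1 j (by rw [mem_shiftList]; omega))),
          TensorProduct.zero_tmul]
      · rw [genBfull_neg (fun hc => h1 (hc.1 j (by rw [mem_shiftList]; omega))),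
          TensorProduct.tmul_zero]
    · push_neg at h
      obtain ⟨j, hj0, hjl, hj⟩ := h
      rw [mem_shiftList] at hjl
      have hx : p.1 (Sum.inr j) + p.2 (Sum.inr j) = e (Sum.inr j) := by
        rw [← Finsupp.add_apply, hp]
      rcases (by omega : p.1 (Sum.inr j) ≠ 0 ∨ p.2 (Sum.inr j) ≠ 0) with h1 | h1
      · rw [genBfull_neg (fun hc => h1 (hc.2 j hj0 (by rw [mem_shiftList]; omega))),
          TensorProduct.zero_tmul]
      · rw [genBfull_neg (fun hc => h1 (hc.2 j (by omega) (by rw [mem_shiftList]; omega))),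
          TensorProduct.tmul_zero]
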